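/- Let G be an equitably 4-colorable graph on n ≥ 2 vertices with n not divisible by 3, and let k ≥ 3 and l ≥ 1 be integers. Then χ_=(G ∘^l C_{2k}) = 4. -/

import Mathlib

open SimpleGraph Finset

/-- The corona `G ∘ H` of two graphs: one copy of `G` and `|V(G)|` copies of `H`,
the `i`-th vertex of `G` being joined to every vertex of the `i`-th copy of `H`. -/
def SimpleGraph.corona {α β : Type*} (G : SimpleGraph α) (H : SimpleGraph β) :
    SimpleGraph (α ⊕ α × β) where
  Adj x y :=
    match x, y with
    | Sum.inl u, Sum.inl v => G.Adj u v
    | Sum.inl u, Sum.inr (v, _) => u = v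
    | Sum.inr (u, _), Sum.inl v => u = v
    | Sum.inr (u, a), Sum.inr (v, b) => u = v ∧ H.Adj a b
  symm := by
    constructor
    rintro (u | ⟨u, a⟩) (v | ⟨v, b⟩) h
    · exact h.symm
    · exact h.symm
    · exact h.symm
    · exact ⟨h.1.symm, h.2.symm⟩
  loopless := by
    constructor
    rintro (u | ⟨u, a⟩) h
    · exact G.loopless.irrefl u h
    · exact H.loopless.irrefl a h.2

universe u

/-- Vertex type of the `l`-fold corona `G ∘^l H` (with `l = 0` giving `G` itself). -/
def coronaType (α β : Type u) : ℕ → Type u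
  | 0 => α
  | l + 1 => coronaType α β l ⊕ coronaType α β l × β

instance coronaType.fintype (α β : Type u) [Fintype α] [Fintype β] :
    ∀ l, Fintype (coronaType α β l)
  | 0 => inferInstanceAs (Fintype α)
  | l + 1 =>
    letI := coronaType.fintype α β l
    inferInstanceAs (Fintype (coronaType α β l ⊕ coronaType α β l × β))

/-- The `l`-fold corona `G ∘^l H`, defined by `G ∘^0 H = G` and
`G ∘^(l+1) H = (G ∘^l H) ∘ H`. -/
def coronaPow {α β : Type u} (G : SimpleGraph α) (H : SimpleGraph β) :
    ∀ l, SimpleGraph (coronaType α β l)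
  | 0 => G
  | l + 1 => (coronaPow G H l).corona H

/-- The canonical copy of a vertex of `G` inside `G ∘^l H`. -/
def coronaBase {α : Type u} (β : Type u) : ∀ l, α → coronaType α β l
  | 0 => id
  | l + 1 => fun a => Sum.inl (coronaBase β l a)

/-- `c` is an equitable `k`-coloring of `G`: it is proper and any two color classes
differ in size by at most one. -/
def SimpleGraph.IsEquitableColoring {V : Type*} [Fintype V] (G : SimpleGraph V) {k : ℕ}
    (c : V → Fin k) : Prop :=
  (∀ ⦃u v⦄, G.Adj u v → c u ≠ c v) ∧
    ∀ i j : Fin k,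
      (Finset.univ.filter fun v => c v = i).card ≤
        (Finset.univ.filter fun v => c v = j).card + 1

/-- `G` is equitably `k`-colorable. -/
def SimpleGraph.EquitablyColorable {V : Type*} [Fintype V] (G : SimpleGraph V) (k : ℕ) : Prop :=
  ∃ c : V → Fin k, G.IsEquitableColoring c

/-- The equitable chromatic number: the least `k` such that `G` is equitably `k`-colorable. -/
noncomputable def SimpleGraph.equitableChromaticNumber {V : Type*} [Fintype V]
    (G : SimpleGraph V) : ℕ :=
  sInf {k | G.EquitablyColorable k}

/-- The maximum degree of a finite graph (no decidability assumptions). -/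
noncomputable def SimpleGraph.maxDeg {V : Type*} [Fintype V] (G : SimpleGraph V) : ℕ :=
  Finset.univ.sup fun v => (G.neighborSet v).ncard

theorem card_filter_prod (A B : Type) [Fintype A] [Fintype B] [DecidableEq A] (P : A × B → Prop) [DecidablePred P] :
    (univ.filter P).card = ∑ a : A, (univ.filter (fun b => P (a,b))).card := by
  rw [Finset.card_eq_sum_card_fiberwise (f := Prod.fst) (t := univ) (fun x _ => mem_univ _)]
  refine Finset.sum_congr rfl fun a _ => ?_
  conv_rhs => rw [← Finset.card_map ⟨fun b => (a, b), fun b c h => by simpa using h⟩]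
  have : Finset.map ⟨fun b => (a, b), fun b c h => by simpa using h⟩ (univ.filter (fun b => P (a,b)))
      = (univ.filter P).filter (fun x => x.1 = a) := by
    ext x
    simp only [mem_filter, mem_map, Function.Embedding.coeFn_mk, mem_univ, true_and]
    constructor
    · rintro ⟨b, hb, rfl⟩; exact ⟨hb, rfl⟩
    · rintro ⟨hP, rfl⟩; exact ⟨x.2, hP, rfl⟩
  rw [this]

theorem card_filter_sum (A B : Type) [Fintype A] [Fintype B] (P : A ⊕ B → Prop) [DecidablePred P] :
    (univ.filter P).card = (univ.filter (fun a => P (Sum.inl a))).card + (univ.filter (fun b => P (Sum.inr b))).card := by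
  have h := Finset.toLeft_disjSum_toRight (u := univ.filter P)
  rw [← h, Finset.card_disjSum]
  have h1 : (univ.filter P).toLeft = univ.filter (fun a => P (Sum.inl a)) := by ext x; simp
  have h2 : (univ.filter P).toRight = univ.filter (fun b => P (Sum.inr b)) := by ext x; simp
  rw [h1, h2]

theorem count_odd_range (K : ℕ) : ((Finset.range (2*K)).filter (fun p => p % 2 = 1)).card = K := by
  induction K with
  | zero => simp
  | succ K ih =>
    have h2 : 2 * (K+1) = (2*K + 1) + 1 := by ring
    rw [h2, Finset.range_add_one, Finset.range_add_one, Finset.filter_insert, Finset.filter_insert,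
      if_pos (by omega : (2*K+1) % 2 = 1), if_neg (by omega : ¬ (2*K) % 2 = 1),
      Finset.card_insert_of_notMem (by simp), ih]

theorem count_evenlt_range (K x : ℕ) (hx : x ≤ K) :
    ((Finset.range (2*K)).filter (fun p => p % 2 = 0 ∧ p / 2 < x)).card = x := by
  induction K generalizing x with
  | zero => interval_cases x; simp
  | succ K ih =>
    have h2 : 2 * (K+1) = (2*K + 1) + 1 := by ring
    rw [h2, Finset.range_add_one, Finset.range_add_one, Finset.filter_insert, Finset.filter_insert,
      if_neg (by omega : ¬ ((2*K+1) % 2 = 0 ∧ (2*K+1)/2 < x))]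
    rcases Nat.lt_or_ge K x with h | h
    · have hxK : x = K + 1 := by omega
      subst hxK
      rw [if_pos (by omega : (2*K) % 2 = 0 ∧ (2*K)/2 < K+1),
        Finset.card_insert_of_notMem (by simp)]
      have he : ((Finset.range (2*K)).filter (fun p => p % 2 = 0 ∧ p / 2 < K+1))
          = ((Finset.range (2*K)).filter (fun p => p % 2 = 0 ∧ p / 2 < K)) := by
        apply Finset.filter_congr
        intro p hp
        simp only [Finset.mem_range] at hp
        constructor <;> (rintro ⟨ha, hb⟩; exact ⟨ha, by omega⟩)
      rw [he, ih K (le_refl K)]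
    · rw [if_neg (by omega : ¬ ((2*K) % 2 = 0 ∧ (2*K)/2 < x)), ih x h]

theorem card_filter_fin (n : ℕ) (Q : ℕ → Prop) [DecidablePred Q] :
    (univ.filter (fun p : Fin n => Q p.val)).card = ((Finset.range n).filter Q).card := by
  have : ((Finset.range n).filter Q) = (univ.filter (fun p : Fin n => Q p.val)).map Fin.valEmbedding := by
    ext x
    simp only [Finset.mem_filter, Finset.mem_range, Finset.mem_map, Finset.mem_univ, true_and,
      Fin.valEmbedding_apply]
    constructor
    · rintro ⟨hx, hq⟩; exact ⟨⟨x, hx⟩, hq, rfl⟩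
    · rintro ⟨p, hq, rfl⟩; exact ⟨p.isLt, hq⟩
  rw [this, Finset.card_map]

-- cycle adjacency parity

theorem cycle_adj_parity {k : ℕ} {u v : Fin (2*k)} (h : (cycleGraph (2*k)).Adj u v) :
    u.val % 2 ≠ v.val % 2 := by
  rw [SimpleGraph.cycleGraph_adj'] at h
  have hu := u.isLt
  have hv := v.isLt
  have key : ∀ a b : Fin (2*k), (a - b).val = 1 → a.val % 2 ≠ b.val % 2 := by
    intro a b hab
    have hsub : (a - b).val = (2*k - b.val + a.val) % (2*k) := by
      rw [Fin.sub_def]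
    rw [hsub] at hab
    have hb := b.isLt
    have ha := a.isLt
    set c := 2*k - b.val + a.val with hc
    have hclt : c < 2*(2*k) := by omega
    have := Nat.div_add_mod c (2*k)
    have hdiv : c / (2*k) ≤ 1 := by
      by_contra hcon
      push_neg at hcon
      have : 2 * (2*k) ≤ (2*k) * (c / (2*k)) := by
        have : 2 ≤ c / (2*k) := hcon
        calc 2*(2*k) = (2*k)*2 := by ring
        _ ≤ (2*k) * (c/(2*k)) := Nat.mul_le_mul_left _ this
      have h5 : (2*k) * (c / (2*k)) ≤ c := by
        rw [Nat.mul_comm]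
        exact Nat.div_mul_le_self c (2*k)
      omega
    interval_cases h : c / (2*k) <;> omega
  rcases h with h | h
  · exact key u v h
  · exact (key v u h).symm

theorem count_evenge_range (K x : ℕ) (hx : x ≤ K) :
    ((Finset.range (2*K)).filter (fun p => p % 2 = 0 ∧ ¬ p / 2 < x)).card = K - x := by
  have h := Finset.card_filter_add_card_filter_not
    (s := (Finset.range (2*K)).filter (fun p => p % 2 = 0)) (p := fun p => p / 2 < x)
  rw [Finset.filter_filter, Finset.filter_filter] at h
  have hodd := count_odd_range K
  have htot := Finset.card_filter_add_card_filter_not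
    (s := Finset.range (2*K)) (p := fun p => p % 2 = 1)
  rw [Finset.card_range] at htot
  have he : (Finset.range (2*K)).filter (fun p => ¬ p % 2 = 1) = (Finset.range (2*K)).filter (fun p => p % 2 = 0) := by
    apply Finset.filter_congr; intro p _; constructor <;> (intro; omega)
  rw [he] at htot
  have hlt := count_evenlt_range K x hx
  have e1 : (Finset.range (2*K)).filter (fun p => p % 2 = 0 ∧ p / 2 < x)
      = (Finset.range (2*K)).filter (fun a => a % 2 = 0 ∧ a / 2 < x) := rfl
  omega

theorem count_even_range (K : ℕ) : ((Finset.range (2*K)).filter (fun p => p % 2 = 0)).card = K := by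
  have h := count_evenge_range K 0 (by omega)
  have he : (Finset.range (2*K)).filter (fun p => p % 2 = 0 ∧ ¬ p / 2 < 0) = (Finset.range (2*K)).filter (fun p => p % 2 = 0) := by
    apply Finset.filter_congr; intro p _; constructor
    · rintro ⟨h1, _⟩; exact h1
    · intro h1; exact ⟨h1, by omega⟩
  rw [he] at h; omega

def cyc (k : ℕ) (i : Fin 4) (x : ℕ) (p : Fin (2*k)) : Fin 4 :=
  if p.val % 2 = 1 then i+2 else if p.val / 2 < x then i+3 else i+1

theorem cyc_apex (k : ℕ) (i : Fin 4) (x : ℕ) (p : Fin (2*k)) : cyc k i x p ≠ i := by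
  have h : i + 2 ≠ i ∧ i + 3 ≠ i ∧ i + 1 ≠ i := by revert i; decide
  unfold cyc
  split_ifs <;> tauto

theorem cyc_proper (k : ℕ) (i : Fin 4) (x : ℕ) {p q : Fin (2*k)}
    (h : p.val % 2 ≠ q.val % 2) : cyc k i x p ≠ cyc k i x q := by
  have h4 : i + 2 ≠ i + 3 ∧ i + 2 ≠ i + 1 := by revert i; decide
  have hp := Nat.mod_two_eq_zero_or_one p.val
  have hq := Nat.mod_two_eq_zero_or_one q.val
  unfold cyc
  rcases hp with hp | hp <;> rcases hq with hq | hq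
  · omega
  · rw [if_neg (by omega), if_pos hq]; split_ifs <;> tauto
  · rw [if_pos hp, if_neg (by omega)]; split_ifs <;> tauto
  · omega

theorem cyc_count (k : ℕ) (i : Fin 4) (x : ℕ) (hx : x ≤ k) (j : Fin 4) :
    (univ.filter (fun p => cyc k i x p = j)).card
      = if j = i+2 then k else if j = i+3 then x else if j = i+1 then k - x else 0 := by
  have hd : (i+2 ≠ i+3) ∧ (i+2 ≠ i+1) ∧ (i+3 ≠ i+1) ∧ (i+2 ≠ i) ∧ (i+3 ≠ i) ∧ (i+1 ≠ i) := by
    revert i; decide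
  by_cases h2 : j = i + 2
  · subst h2
    rw [if_pos rfl]
    have he : (univ.filter (fun p : Fin (2*k) => cyc k i x p = i + 2))
        = univ.filter (fun p : Fin (2*k) => p.val % 2 = 1) := by
      apply Finset.filter_congr; intro p _
      unfold cyc
      split_ifs with h1 hlt <;> simp_all <;> tauto
    rw [he, card_filter_fin (2*k) (fun v => v % 2 = 1), count_odd_range]
  by_cases h3 : j = i + 3
  · subst h3
    rw [if_neg h2, if_pos rfl]
    have he : (univ.filter (fun p : Fin (2*k) => cyc k i x p = i + 3))
        = univ.filter (fun p : Fin (2*k) => p.val % 2 = 0 ∧ p.val / 2 < x) := by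
      apply Finset.filter_congr; intro p _
      unfold cyc
      split_ifs with h1 hlt <;> constructor <;> intro hh <;> simp_all <;> omega
    rw [he, card_filter_fin (2*k) (fun v => v % 2 = 0 ∧ v / 2 < x), count_evenlt_range k x hx]
  by_cases h1 : j = i + 1
  · subst h1
    rw [if_neg h2, if_neg h3, if_pos rfl]
    have he : (univ.filter (fun p : Fin (2*k) => cyc k i x p = i + 1))
        = univ.filter (fun p : Fin (2*k) => p.val % 2 = 0 ∧ ¬ p.val / 2 < x) := by
      apply Finset.filter_congr; intro p _
      unfold cyc
      split_ifs with ha hb <;> constructor <;> intro hh <;> simp_all <;> omega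
    rw [he, card_filter_fin (2*k) (fun v => v % 2 = 0 ∧ ¬ v / 2 < x), count_evenge_range k x hx]
  · rw [if_neg h2, if_neg h3, if_neg h1]
    have hj : j = i :=
      (by decide : ∀ i j : Fin 4, j ≠ i + 2 → j ≠ i + 3 → j ≠ i + 1 → j = i) i j h2 h3 h1
    subst hj
    rw [Finset.card_eq_zero, Finset.filter_eq_empty_iff]
    intro p _
    exact cyc_apex k _ x p

theorem key_arith (k : ℕ) (hk : 3 ≤ k) (a : Fin 4 → ℕ)
    (ha : ∀ i j : Fin 4, a i ≤ a j + 1) (hN : 2 ≤ a 0 + a 1 + a 2 + a 3) :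
    ∃ g : Fin 4 → ℕ, (∀ i, g i ≤ k) ∧ (∀ i, g i ≤ k * a i) ∧
      ∃ t : ℕ, ∀ j : Fin 4,
        a j + k * a (j+2) + g (j+1) + (k * a (j+3) - g (j+3)) = t ∨
        a j + k * a (j+2) + g (j+1) + (k * a (j+3) - g (j+3)) = t + 1 := by
  obtain ⟨i0, hmin⟩ := Finite.exists_min a
  set m := a i0 with hm
  have ha' : ∀ i, a i = m ∨ a i = m + 1 := by
    intro i
    have := hmin i
    have := ha i i0
    omega
  have e1 : k * (m+1) = k*m + k := by ring
  have h0 := ha' 0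
  have h1 := ha' 1
  have h2 := ha' 2
  have h3 := ha' 3
  rcases h0 with h0 | h0 <;> rcases h1 with h1 | h1 <;> rcases h2 with h2 | h2 <;> rcases h3 with h3 | h3
  · -- case (False, False, False, False)
    refine ⟨![0,0,0,0], ?_, ?_, 2*(k*m)+m, ?_⟩
    · intro i; fin_cases i <;> simp <;> omega
    · intro i; fin_cases i <;> simp [h0, h1, h2, h3, e1] <;> omega
    · intro j; fin_cases j <;> simp [h0, h1, h2, h3, e1] <;> omega
  · -- case (False, False, False, True)
    have hm1 : 1 ≤ m := by omega
    have hk2 : k * 1 ≤ k * m := Nat.mul_le_mul_left k hm1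
    refine ⟨![(k/2),0,0,(k - k/2)], ?_, ?_, 2*(k*m)+m+k/2, ?_⟩
    · intro i; fin_cases i <;> simp <;> omega
    · intro i; fin_cases i <;> simp [h0, h1, h2, h3, e1] <;> omega
    · intro j; fin_cases j <;> simp [h0, h1, h2, h3, e1] <;> omega
  · -- case (False, False, True, False)
    have hm1 : 1 ≤ m := by omega
    have hk2 : k * 1 ≤ k * m := Nat.mul_le_mul_left k hm1
    refine ⟨![0,0,(k - k/2),(k/2)], ?_, ?_, 2*(k*m)+m+k/2, ?_⟩
    · intro i; fin_cases i <;> simp <;> omega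
    · intro i; fin_cases i <;> simp [h0, h1, h2, h3, e1] <;> omega
    · intro j; fin_cases j <;> simp [h0, h1, h2, h3, e1] <;> omega
  · -- case (False, False, True, True)
    refine ⟨![0,0,0,k], ?_, ?_, 2*(k*m)+m+k, ?_⟩
    · intro i; fin_cases i <;> simp <;> omega
    · intro i; fin_cases i <;> simp [h0, h1, h2, h3, e1] <;> omega
    · intro j; fin_cases j <;> simp [h0, h1, h2, h3, e1] <;> omega
  · -- case (False, True, False, False)
    have hm1 : 1 ≤ m := by omega
    have hk2 : k * 1 ≤ k * m := Nat.mul_le_mul_left k hm1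
    refine ⟨![0,(k - k/2),(k/2),0], ?_, ?_, 2*(k*m)+m+k/2, ?_⟩
    · intro i; fin_cases i <;> simp <;> omega
    · intro i; fin_cases i <;> simp [h0, h1, h2, h3, e1] <;> omega
    · intro j; fin_cases j <;> simp [h0, h1, h2, h3, e1] <;> omega
  · -- case (False, True, False, True)
    refine ⟨![0,0,0,0], ?_, ?_, 2*(k*m)+m+k, ?_⟩
    · intro i; fin_cases i <;> simp <;> omega
    · intro i; fin_cases i <;> simp [h0, h1, h2, h3, e1] <;> omega
    · intro j; fin_cases j <;> simp [h0, h1, h2, h3, e1] <;> omega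
  · -- case (False, True, True, False)
    refine ⟨![0,0,k,0], ?_, ?_, 2*(k*m)+m+k, ?_⟩
    · intro i; fin_cases i <;> simp <;> omega
    · intro i; fin_cases i <;> simp [h0, h1, h2, h3, e1] <;> omega
    · intro j; fin_cases j <;> simp [h0, h1, h2, h3, e1] <;> omega
  · -- case (False, True, True, True)
    refine ⟨![0,0,(k/2),(k/2)], ?_, ?_, 2*(k*m)+m+k+k/2+k%2, ?_⟩
    · intro i; fin_cases i <;> simp <;> omega
    · intro i; fin_cases i <;> simp [h0, h1, h2, h3, e1] <;> omega
    · intro j; fin_cases j <;> simp [h0, h1, h2, h3, e1] <;> omega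
  · -- case (True, False, False, False)
    have hm1 : 1 ≤ m := by omega
    have hk2 : k * 1 ≤ k * m := Nat.mul_le_mul_left k hm1
    refine ⟨![(k - k/2),(k/2),0,0], ?_, ?_, 2*(k*m)+m+k/2, ?_⟩
    · intro i; fin_cases i <;> simp <;> omega
    · intro i; fin_cases i <;> simp [h0, h1, h2, h3, e1] <;> omega
    · intro j; fin_cases j <;> simp [h0, h1, h2, h3, e1] <;> omega
  · -- case (True, False, False, True)
    refine ⟨![k,0,0,0], ?_, ?_, 2*(k*m)+m+k, ?_⟩
    · intro i; fin_cases i <;> simp <;> omega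
    · intro i; fin_cases i <;> simp [h0, h1, h2, h3, e1] <;> omega
    · intro j; fin_cases j <;> simp [h0, h1, h2, h3, e1] <;> omega
  · -- case (True, False, True, False)
    refine ⟨![0,0,0,0], ?_, ?_, 2*(k*m)+m+k, ?_⟩
    · intro i; fin_cases i <;> simp <;> omega
    · intro i; fin_cases i <;> simp [h0, h1, h2, h3, e1] <;> omega
    · intro j; fin_cases j <;> simp [h0, h1, h2, h3, e1] <;> omega
  · -- case (True, False, True, True)
    refine ⟨![(k/2),0,0,(k/2)], ?_, ?_, 2*(k*m)+m+k+k/2+k%2, ?_⟩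
    · intro i; fin_cases i <;> simp <;> omega
    · intro i; fin_cases i <;> simp [h0, h1, h2, h3, e1] <;> omega
    · intro j; fin_cases j <;> simp [h0, h1, h2, h3, e1] <;> omega
  · -- case (True, True, False, False)
    refine ⟨![0,k,0,0], ?_, ?_, 2*(k*m)+m+k, ?_⟩
    · intro i; fin_cases i <;> simp <;> omega
    · intro i; fin_cases i <;> simp [h0, h1, h2, h3, e1] <;> omega
    · intro j; fin_cases j <;> simp [h0, h1, h2, h3, e1] <;> omega
  · -- case (True, True, False, True)
    refine ⟨![(k/2),(k/2),0,0], ?_, ?_, 2*(k*m)+m+k+k/2+k%2, ?_⟩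
    · intro i; fin_cases i <;> simp <;> omega
    · intro i; fin_cases i <;> simp [h0, h1, h2, h3, e1] <;> omega
    · intro j; fin_cases j <;> simp [h0, h1, h2, h3, e1] <;> omega
  · -- case (True, True, True, False)
    refine ⟨![0,(k/2),(k/2),0], ?_, ?_, 2*(k*m)+m+k+k/2+k%2, ?_⟩
    · intro i; fin_cases i <;> simp <;> omega
    · intro i; fin_cases i <;> simp [h0, h1, h2, h3, e1] <;> omega
    · intro j; fin_cases j <;> simp [h0, h1, h2, h3, e1] <;> omega
  · -- case (True, True, True, True)
    refine ⟨![0,0,0,0], ?_, ?_, 2*(k*m)+m+2*k+1, ?_⟩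
    · intro i; fin_cases i <;> simp <;> omega
    · intro i; fin_cases i <;> simp [h0, h1, h2, h3, e1] <;> omega
    · intro j; fin_cases j <;> simp [h0, h1, h2, h3, e1] <;> omega

theorem corona_equitable {V : Type} [Fintype V] (G' : SimpleGraph V) (k : ℕ) (hk : 3 ≤ k)
    (h2 : 2 ≤ Fintype.card V) (hG : G'.EquitablyColorable 4) :
    (G'.corona (cycleGraph (2*k))).EquitablyColorable 4 := by
  classical
  obtain ⟨c, hcp, hceq⟩ := hG
  set a : Fin 4 → ℕ := fun j => (univ.filter (fun v => c v = j)).card with ha_def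
  have hN : 2 ≤ a 0 + a 1 + a 2 + a 3 := by
    have hcard : (univ : Finset V).card = ∑ j : Fin 4, a j := by
      exact Finset.card_eq_sum_card_fiberwise (fun v _ => mem_univ (c v))
    rw [Fin.sum_univ_four] at hcard
    have : (univ : Finset V).card = Fintype.card V := rfl
    omega
  obtain ⟨g, hgk, hga, t, ht⟩ := key_arith k hk a hceq hN
  have hVne : Nonempty V := by
    rw [← Fintype.card_pos_iff]; omega
  set pick : Fin 4 → V := fun i => if h : ∃ v, c v = i then h.choose else Classical.arbitrary V with hpick_def
  have hpick : ∀ i, (∃ v, c v = i) → c (pick i) = i := by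
    intro i h
    simp only [hpick_def, dif_pos h]
    exact h.choose_spec
  set x : V → ℕ := fun v => if pick (c v) = v then g (c v) else 0 with hx_def
  have hx : ∀ v, x v ≤ k := by
    intro v
    simp only [hx_def]
    split_ifs
    · exact hgk _
    · omega
  refine ⟨Sum.elim c (fun vp => cyc k (c vp.1) (x vp.1) vp.2), ?_, ?_⟩
  · -- proper
    rintro (u | ⟨u, p⟩) (v | ⟨v, q⟩) hadj
    · exact hcp hadj
    · have huv : u = v := hadj
      subst huv
      simp only [Sum.elim_inl, Sum.elim_inr]
      exact fun hh => cyc_apex k (c u) (x u) q hh.symm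
    · have huv : u = v := hadj
      subst huv
      simp only [Sum.elim_inl, Sum.elim_inr]
      exact fun hh => cyc_apex k (c u) (x u) p hh
    · obtain ⟨huv, hpq⟩ := hadj
      subst huv
      simp only [Sum.elim_inr]
      exact cyc_proper k (c u) (x u) (cycle_adj_parity hpq)
  · -- equitable
    have hXi : ∀ i : Fin 4, (∑ v ∈ univ.filter (fun v => c v = i), x v) = g i := by
      intro i
      have hsum : (∑ v ∈ univ.filter (fun v => c v = i), x v)
          = ∑ v ∈ univ.filter (fun v => c v = i), (if pick i = v then g i else 0) := by
        apply Finset.sum_congr rfl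
        intro v hv
        rw [Finset.mem_filter] at hv
        simp only [hx_def, hv.2]
      rw [hsum, Finset.sum_ite_eq]
      by_cases hex : ∃ v, c v = i
      · rw [if_pos (by rw [Finset.mem_filter]; exact ⟨mem_univ _, hpick i hex⟩)]
      · rw [if_neg (by rw [Finset.mem_filter]; push_neg; intro _; exact fun hc => hex ⟨_, hc⟩)]
        have hai : a i = 0 := by
          rw [ha_def]
          rw [Finset.card_eq_zero, Finset.filter_eq_empty_iff]
          intro v _
          exact fun hc => hex ⟨_, hc⟩
        have := hga i
        rw [hai] at this
        omega
    have hclassS : ∀ (i j : Fin 4),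
        (∑ v ∈ univ.filter (fun v => c v = i), (univ.filter (fun p => cyc k (c v) (x v) p = j)).card)
          = (if j = i+2 then k * a i else if j = i+3 then g i else if j = i+1 then k * a i - g i else 0) := by
      intro i j
      have hsum : (∑ v ∈ univ.filter (fun v => c v = i), (univ.filter (fun p => cyc k (c v) (x v) p = j)).card)
          = ∑ v ∈ univ.filter (fun v => c v = i),
              (if j = i+2 then k else if j = i+3 then x v else if j = i+1 then k - x v else 0) := by
        apply Finset.sum_congr rfl
        intro v hv
        rw [Finset.mem_filter] at hv
        rw [hv.2] at *
        exact cyc_count k i (x v) (hx v) j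
      rw [hsum]
      by_cases h1 : j = i + 2
      · simp only [if_pos h1, Finset.sum_const, smul_eq_mul, ha_def, Nat.mul_comm]
      by_cases h3 : j = i + 3
      · simp only [if_neg h1, if_pos h3]
        exact hXi i
      by_cases h0 : j = i + 1
      · simp only [if_neg h1, if_neg h3, if_pos h0]
        have hsplit : (∑ v ∈ univ.filter (fun v => c v = i), (k - x v))
            + (∑ v ∈ univ.filter (fun v => c v = i), x v) = k * a i := by
          rw [← Finset.sum_add_distrib]
          have : ∀ v ∈ univ.filter (fun v => c v = i), (k - x v) + x v = k := by
            intro v _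
            have := hx v
            omega
          rw [Finset.sum_congr rfl this, Finset.sum_const, smul_eq_mul, Nat.mul_comm]
        rw [hXi i] at hsplit
        omega
      · simp only [if_neg h1, if_neg h3, if_neg h0, Finset.sum_const_zero]
    have hbj : ∀ j : Fin 4,
        (univ.filter (fun z : V ⊕ V × Fin (2*k) => Sum.elim c (fun vp => cyc k (c vp.1) (x vp.1) vp.2) z = j)).card
          = a j + k * a (j+2) + g (j+1) + (k * a (j+3) - g (j+3)) := by
      intro j
      rw [card_filter_sum]
      simp only [Sum.elim_inl, Sum.elim_inr]
      change (univ.filter (fun v => c v = j)).card + (univ.filter (fun vp : V × Fin (2*k) => cyc k (c vp.1) (x vp.1) vp.2 = j)).card = _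
      rw [card_filter_prod V (Fin (2*k)) (fun vp => cyc k (c vp.1) (x vp.1) vp.2 = j)]
      have hfib : (∑ v : V, (univ.filter (fun p => cyc k (c v) (x v) p = j)).card)
          = ∑ i : Fin 4, ∑ v ∈ univ.filter (fun v => c v = i), (univ.filter (fun p => cyc k (c v) (x v) p = j)).card := by
        exact (Finset.sum_fiberwise_of_maps_to (fun v _ => mem_univ (c v)) _).symm
      rw [hfib]
      have hthis : ∀ i : Fin 4, (∑ v ∈ univ.filter (fun v => c v = i), (univ.filter (fun p => cyc k (c v) (x v) p = j)).card)
          = (if j = i+2 then k * a i else if j = i+3 then g i else if j = i+1 then k * a i - g i else 0) :=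
        fun i => hclassS i j
      rw [Fin.sum_univ_four, hthis 0, hthis 1, hthis 2, hthis 3]
      have h4 := (by decide : ∀ j : Fin 4, j = 0 ∨ j = 1 ∨ j = 2 ∨ j = 3) j
      rcases h4 with rfl | rfl | rfl | rfl <;>
        simp only [Fin.reduceAdd, Fin.reduceEq, reduceIte, if_true, if_false, ha_def] <;> omega
    intro i j
    rcases ht i with hi | hi <;> rcases ht j with hj | hj <;> rw [hbj i, hbj j, hi, hj] <;> omega

theorem cycle_adj_succ {k : ℕ} (hk : 3 ≤ k) (t : ℕ) (h1 : t + 1 < 2*k) :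
    (cycleGraph (2*k)).Adj ⟨t, by omega⟩ ⟨t+1, h1⟩ := by
  rw [SimpleGraph.cycleGraph_adj']
  right
  rw [Fin.sub_def]
  simp only
  have h2 : 2*k - t + (t+1) = 2*k + 1 := by omega
  rw [h2, Nat.add_mod_left, Nat.mod_eq_of_lt (by omega)]

theorem cycle3_count {k : ℕ} (hk : 3 ≤ k) (f : Fin (2*k) → Fin 3)
    (hf : ∀ ⦃p q⦄, (cycleGraph (2*k)).Adj p q → f p ≠ f q)
    {i : Fin 3} (hi : ∀ p, f p ≠ i) (j : Fin 3) :
    (univ.filter (fun p => f p = j)).card = if j = i then 0 else k := by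
  have hk2 : 1 < 2*k := by omega
  set z0 : Fin (2*k) := ⟨0, by omega⟩ with hz0
  set z1 : Fin (2*k) := ⟨1, hk2⟩ with hz1
  have hadj01 : (cycleGraph (2*k)).Adj z0 z1 := cycle_adj_succ hk 0 hk2
  set c0 := f z0 with hc0
  set c1 := f z1 with hc1
  have hne : c0 ≠ c1 := hf hadj01
  have hi0 : c0 ≠ i := hi z0
  have hi1 : c1 ≠ i := hi z1
  have halt : ∀ t : ℕ, ∀ ht : t < 2*k, f ⟨t, ht⟩ = if t % 2 = 0 then c0 else c1 := by
    intro t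
    induction t with
    | zero => intro ht; simp [hc0, hz0]
    | succ t ih =>
      intro ht
      have ht' : t < 2*k := by omega
      have hadj : (cycleGraph (2*k)).Adj ⟨t, ht'⟩ ⟨t+1, ht⟩ := cycle_adj_succ hk t ht
      have h1 := hf hadj
      have h2 := hi ⟨t+1, ht⟩
      have h3 := ih ht'
      have key : ∀ a b i c0 c1 : Fin 3, c0 ≠ i → c1 ≠ i → c0 ≠ c1 → b ≠ i → b ≠ a →
          (a = c0 → b = c1) ∧ (a = c1 → b = c0) := by decide
      rcases Nat.mod_two_eq_zero_or_one t with hp | hp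
      · rw [if_pos hp] at h3
        rw [if_neg (by omega)]
        exact (key (f ⟨t,ht'⟩) (f ⟨t+1,ht⟩) i c0 c1 hi0 hi1 hne h2 (Ne.symm h1)).1 h3
      · rw [if_neg (by omega)] at h3
        rw [if_pos (by omega)]
        exact (key (f ⟨t,ht'⟩) (f ⟨t+1,ht⟩) i c0 c1 hi0 hi1 hne h2 (Ne.symm h1)).2 h3
  by_cases hji : j = i
  · rw [if_pos hji]
    rw [Finset.card_eq_zero, Finset.filter_eq_empty_iff]
    intro p _
    rw [hji]
    exact hi p
  · rw [if_neg hji]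
    have hj01 : j = c0 ∨ j = c1 :=
      (by decide : ∀ i c0 c1 j : Fin 3, c0 ≠ i → c1 ≠ i → c0 ≠ c1 → j ≠ i → j = c0 ∨ j = c1)
        i c0 c1 j hi0 hi1 hne hji
    rcases hj01 with rfl | rfl
    · have he : (univ.filter (fun p : Fin (2*k) => f p = c0)) = univ.filter (fun p : Fin (2*k) => p.val % 2 = 0) := by
        apply Finset.filter_congr
        intro p _
        have := halt p.val p.isLt
        have hp : (⟨p.val, p.isLt⟩ : Fin (2*k)) = p := rfl
        rw [hp] at this
        rw [this]
        constructor
        · intro hh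
          by_contra hcon
          rw [if_neg hcon] at hh
          exact hne hh.symm
        · intro hh; rw [if_pos hh]
      rw [he, card_filter_fin (2*k) (fun v => v % 2 = 0), count_even_range]
    · have he : (univ.filter (fun p : Fin (2*k) => f p = c1)) = univ.filter (fun p : Fin (2*k) => p.val % 2 = 1) := by
        apply Finset.filter_congr
        intro p _
        have := halt p.val p.isLt
        have hp : (⟨p.val, p.isLt⟩ : Fin (2*k)) = p := rfl
        rw [hp] at this
        rw [this]
        constructor
        · intro hh
          rcases Nat.mod_two_eq_zero_or_one p.val with h | h
          · rw [if_pos h] at hh; exact absurd hh hne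
          · exact h
        · intro hh; rw [if_neg (by omega)]
      rw [he, card_filter_fin (2*k) (fun v => v % 2 = 1), count_odd_range]

theorem corona_equal3 {V : Type} [Fintype V] (G' : SimpleGraph V) {k : ℕ} (hk : 3 ≤ k)
    (c : V ⊕ V × Fin (2*k) → Fin 3)
    (hp : ∀ ⦃u v⦄, (G'.corona (cycleGraph (2*k))).Adj u v → c u ≠ c v)
    (heq : ∀ i j : Fin 3, (univ.filter fun z => c z = i).card ≤ (univ.filter fun z => c z = j).card + 1) :
    (∀ ⦃u v⦄, G'.Adj u v → c (Sum.inl u) ≠ c (Sum.inl v)) ∧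
    (∀ i j : Fin 3, (univ.filter fun v => c (Sum.inl v) = i).card
      = (univ.filter fun v => c (Sum.inl v) = j).card) := by
  classical
  constructor
  · intro u v hadj
    exact hp (show (G'.corona (cycleGraph (2*k))).Adj (Sum.inl u) (Sum.inl v) from hadj)
  set a : Fin 3 → ℕ := fun j => (univ.filter (fun v => c (Sum.inl v) = j)).card with ha_def
  set N : ℕ := Fintype.card V with hN_def
  have haN : ∀ j, a j ≤ N := fun j => Finset.card_filter_le _ _
  have hbj : ∀ j : Fin 3, (univ.filter (fun z => c z = j)).card = a j + (N - a j) * k := by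
    intro j
    rw [card_filter_sum]
    rw [card_filter_prod V (Fin (2*k)) (fun vp => c (Sum.inr vp) = j)]
    have hper : ∀ v : V, (univ.filter (fun p : Fin (2*k) => c (Sum.inr (v, p)) = j)).card
        = if c (Sum.inl v) = j then 0 else k := by
      intro v
      have hcount := cycle3_count hk (fun p => c (Sum.inr (v, p)))
        (fun p q hpq => hp (show (G'.corona (cycleGraph (2*k))).Adj (Sum.inr (v,p)) (Sum.inr (v,q)) from ⟨rfl, hpq⟩))
        (i := c (Sum.inl v))
        (fun p => fun hc => (hp (show (G'.corona (cycleGraph (2*k))).Adj (Sum.inl v) (Sum.inr (v,p)) from rfl)) hc.symm)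
        j
      rw [hcount]
      by_cases h : c (Sum.inl v) = j
      · rw [if_pos (by rw [h]), if_pos h]
      · rw [if_neg (fun hh => h hh.symm), if_neg h]
    have hsum : (∑ v : V, (univ.filter (fun p : Fin (2*k) => c (Sum.inr (v, p)) = j)).card)
        = ∑ v : V, (if c (Sum.inl v) = j then 0 else k) := by
      exact Finset.sum_congr rfl (fun v _ => hper v)
    rw [hsum, Finset.sum_ite, Finset.sum_const_zero, Finset.sum_const, smul_eq_mul, zero_add]
    have hcompl := Finset.card_filter_add_card_filter_not
      (s := (univ : Finset V)) (p := fun v => c (Sum.inl v) = j)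
    have hcard : (univ.filter (fun v => ¬ c (Sum.inl v) = j)).card = N - a j := by
      have h5 : (univ : Finset V).card = N := rfl
      have haj : a j = (univ.filter (fun v => c (Sum.inl v) = j)).card := rfl
      omega
    rw [hcard]
  intro i j
  have h1 := heq i j
  have h2 := heq j i
  rw [hbj i, hbj j] at h1 h2
  show a i = a j
  have hi := haN i
  have hj := haN j
  rcases Nat.lt_trichotomy (a i) (a j) with h | h | h
  · exfalso
    have e1 : (N - a i) = (N - a j) + (a j - a i) := by omega
    have e2 : (N - a i) * k = (N - a j) * k + (a j - a i) * k := by rw [e1, Nat.add_mul]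
    have e3 : (a j - a i) * 3 ≤ (a j - a i) * k := Nat.mul_le_mul_left _ hk
    omega
  · exact h
  · exfalso
    have e1 : (N - a j) = (N - a i) + (a i - a j) := by omega
    have e2 : (N - a j) * k = (N - a i) * k + (a i - a j) * k := by rw [e1, Nat.add_mul]
    have e3 : (a i - a j) * 3 ≤ (a i - a j) * k := Nat.mul_le_mul_left _ hk
    omega


section Assembly

variable {α : Type} [Fintype α]

theorem no_equal3 (G : SimpleGraph α) (k n : ℕ) (hk : 3 ≤ k) (hn : Fintype.card α = n)
    (hndvd : ¬ 3 ∣ n) :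
    ∀ l, ¬ ∃ c : coronaType α (Fin (2*k)) l → Fin 3,
      (∀ ⦃u v⦄, (coronaPow G (cycleGraph (2*k)) l).Adj u v → c u ≠ c v) ∧
      (∀ i j : Fin 3, (univ.filter fun z => c z = i).card
        = (univ.filter fun z => c z = j).card)
  | 0 => by
    rintro ⟨c, hcp, hceq⟩
    have hcard : (univ : Finset α).card
        = ∑ j : Fin 3, (univ.filter fun z => c z = j).card :=
      Finset.card_eq_sum_card_fiberwise (fun v _ => Finset.mem_univ (c v))
    rw [Fin.sum_univ_three] at hcard
    have h1 := hceq 0 1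
    have h2 := hceq 0 2
    have hcu : (univ : Finset α).card = n := hn
    exact hndvd ⟨(univ.filter fun z => c z = 0).card, by omega⟩
  | (l+1) => by
    rintro ⟨c, hcp, hceq⟩
    have h := corona_equal3 (coronaPow G (cycleGraph (2*k)) l) hk c hcp
      (fun i j => le_trans (le_of_eq (hceq i j)) (Nat.le_succ _))
    exact no_equal3 G k n hk hn hndvd l ⟨fun v => c (Sum.inl v), h.1, h.2⟩

theorem no_small (G : SimpleGraph α) (k : ℕ) (hk : 3 ≤ k) (hne : Nonempty α) (l : ℕ)
    (m : ℕ) (hm : m ≤ 2) :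
    ¬ (coronaPow G (cycleGraph (2*k)) (l+1)).EquitablyColorable m := by
  intro hcol
  obtain ⟨a0⟩ := hne
  have hk2 : 1 < 2*k := by omega
  have hm3 : m = 0 ∨ m = 1 ∨ m = 2 := by omega
  set v0 : coronaType α (Fin (2*k)) l := coronaBase (Fin (2*k)) l a0 with hv0
  set z0 : Fin (2*k) := ⟨0, by omega⟩ with hz0
  set z1 : Fin (2*k) := ⟨1, hk2⟩ with hz1
  rcases hm3 with rfl | rfl | rfl
  · obtain ⟨c, hcp, -⟩ := hcol
    exact (c (Sum.inl v0)).elim0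
  · obtain ⟨c, hcp, -⟩ := hcol
    exact hcp
      (show (coronaPow G (cycleGraph (2*k)) (l+1)).Adj (Sum.inl v0) (Sum.inr (v0, z0)) from rfl)
      (Subsingleton.elim _ _)
  · obtain ⟨c, hcp, -⟩ := hcol
    have hAB := hcp
      (show (coronaPow G (cycleGraph (2*k)) (l+1)).Adj (Sum.inl v0) (Sum.inr (v0, z0)) from rfl)
    have hAC := hcp
      (show (coronaPow G (cycleGraph (2*k)) (l+1)).Adj (Sum.inl v0) (Sum.inr (v0, z1)) from rfl)
    have hBC := hcp
      (show (coronaPow G (cycleGraph (2*k)) (l+1)).Adj (Sum.inr (v0, z0)) (Sum.inr (v0, z1)) from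
        ⟨rfl, cycle_adj_succ hk 0 hk2⟩)
    exact (by decide : ∀ x y z : Fin 2, x ≠ y → x ≠ z → y ≠ z → False) _ _ _ hAB hAC hBC

theorem equit4_all (G : SimpleGraph α) (k : ℕ) (hk : 3 ≤ k) (h2 : 2 ≤ Fintype.card α)
    (hG : G.EquitablyColorable 4) :
    ∀ l, (coronaPow G (cycleGraph (2*k)) l).EquitablyColorable 4
        ∧ 2 ≤ Fintype.card (coronaType α (Fin (2*k)) l)
  | 0 => ⟨hG, h2⟩
  | (l+1) => by
    obtain ⟨hcol, hcard⟩ := equit4_all G k hk h2 hG l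
    constructor
    · exact corona_equitable (coronaPow G (cycleGraph (2*k)) l) k hk hcard hcol
    · have hinj := Fintype.card_le_of_injective
        (Sum.inl : coronaType α (Fin (2*k)) l →
          coronaType α (Fin (2*k)) l ⊕ coronaType α (Fin (2*k)) l × Fin (2*k))
        Sum.inl_injective
      have hce : Fintype.card (coronaType α (Fin (2*k)) (l+1))
          = Fintype.card (coronaType α (Fin (2*k)) l ⊕ coronaType α (Fin (2*k)) l × Fin (2*k)) :=
        Fintype.card_congr (Equiv.refl _)
      omega

end Assembly

/-- If `G` is equitably 4-colorable on `n ≥ 2` vertices, `3 ∤ n`,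
`k ≥ 3` and `l ≥ 1`, then `χ₌(G ∘^l C_{2k}) = 4`. -/
theorem equitableChromaticNumber_coronaPow_evenCycle_eq_four
    {α : Type} [Fintype α] (G : SimpleGraph α) (n k l : ℕ)
    (hn : Fintype.card α = n) (hn2 : 2 ≤ n) (hG : G.EquitablyColorable 4)
    (hndvd : ¬ 3 ∣ n) (hk : 3 ≤ k) (hl : 1 ≤ l) :
    (coronaPow G (cycleGraph (2 * k)) l).equitableChromaticNumber = 4 := by
  have hl' : ∃ l', l = l' + 1 := ⟨l - 1, by omega⟩
  obtain ⟨l', rfl⟩ := hl'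
  have hne : Nonempty α := by
    rw [← Fintype.card_pos_iff]; omega
  have h4 : (coronaPow G (cycleGraph (2*k)) (l'+1)).EquitablyColorable 4 :=
    (equit4_all G k hk (by omega) hG (l'+1)).1
  have hlow : ∀ m, (coronaPow G (cycleGraph (2*k)) (l'+1)).EquitablyColorable m → 4 ≤ m := by
    intro m hm
    by_contra hcon
    push_neg at hcon
    have hm3 : m = 0 ∨ m = 1 ∨ m = 2 ∨ m = 3 := by omega
    rcases hm3 with rfl | rfl | rfl | rfl
    · exact no_small G k hk hne l' 0 (by omega) hm
    · exact no_small G k hk hne l' 1 (by omega) hm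
    · exact no_small G k hk hne l' 2 (by omega) hm
    · obtain ⟨c, hcp, hceq⟩ := hm
      have h := corona_equal3 (coronaPow G (cycleGraph (2*k)) l') hk c hcp hceq
      exact no_equal3 G k n hk hn hndvd l' ⟨fun v => c (Sum.inl v), h.1, h.2⟩
  rw [SimpleGraph.equitableChromaticNumber]
  have hmem : sInf {m | (coronaPow G (cycleGraph (2*k)) (l'+1)).EquitablyColorable m}
      ∈ {m | (coronaPow G (cycleGraph (2*k)) (l'+1)).EquitablyColorable m} :=
    Nat.sInf_mem ⟨4, h4⟩
  have hge := hlow _ hmem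
  have hle : sInf {m | (coronaPow G (cycleGraph (2*k)) (l'+1)).EquitablyColorable m} ≤ 4 :=
    Nat.sInf_le h4
  omega
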